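/- For all m, n ≥ 1, every subset E of {0,…,m−1}×{0,…,n−1} for which there exist i ∈ {0,…,m−1} and j ∈ {0,…,n−1} with ({i}×{0,…,n−1}) ∪ ({0,…,m−1}×{j}) ⊆ E is reachable. -/

import Mathlib

open Finset

/-- `Π·h`: the vector whose `q`-th entry is the union of the `Π p` over all `p` with `h p = q`. -/
def dotAct {n : ℕ} (Pi : Fin n → Finset ℕ) (h : Fin n → Fin n) : Fin n → Finset ℕ :=
  fun q => (Finset.univ.filter (fun p => h p = q)).biUnion Pi

/-- Entrywise union of two vectors of sets. -/
def vUnion {n : ℕ} (Pi Pi' : Fin n → Finset ℕ) : Fin n → Finset ℕ :=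
  fun q => Pi q ∪ Pi' q

/-- `r = max (π₀ ∪ … ∪ π_{n−1})`. -/
def vMax {n : ℕ} (Pi : Fin n → Finset ℕ) : ℕ :=
  (Finset.univ.sup Pi).sup id

/-- `Π↑`: add `r = max (π₀ ∪ … ∪ π_{n−1})` to every element of every entry. -/
def vUp {n : ℕ} (Pi : Fin n → Finset ℕ) : Fin n → Finset ℕ :=
  fun q => (Pi q).image (· + vMax Pi)

/-- A `k`-EXPcomposition of size `n`: pairwise disjoint entries whose union is `{1,…,2^k}`. -/
def IsEXP {n : ℕ} (k : ℕ) (Pi : Fin n → Finset ℕ) : Prop :=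
  (∀ p q : Fin n, p ≠ q → Disjoint (Pi p) (Pi q)) ∧
    Finset.univ.sup Pi = Finset.Icc 1 (2 ^ k)

/-- A `k`-Rvalid vector of size `n`. -/
def IsRvalid {n : ℕ} (k : ℕ) (ρ : Fin n → Finset ℕ) : Prop :=
  IsEXP k ρ ∧ (∀ p : Fin n, p.val = 0 → 1 ∈ ρ p) ∧
    ∀ k' < k, ∀ i ∈ Finset.Icc 1 (2 ^ k'), ∀ j ∈ Finset.Icc 1 (2 ^ k'),
      (∃ α, i ∈ ρ α ∧ j ∈ ρ α) → ∃ β, i + 2 ^ k' ∈ ρ β ∧ j + 2 ^ k' ∈ ρ β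

/-- A `k`-Lvalid vector of size `m`. -/
def IsLvalid {m : ℕ} (k : ℕ) (lam : Fin m → Finset ℕ) : Prop :=
  IsEXP k lam ∧ (∀ p : Fin m, p.val = 0 → 2 ^ k ∈ lam p) ∧
    ∀ k' < k, ∀ i ∈ Finset.Icc 1 (2 ^ k'), ∀ j ∈ Finset.Icc 1 (2 ^ k'),
      (∃ α, 2 ^ k + 1 - i ∈ lam α ∧ 2 ^ k + 1 - j ∈ lam α) →
        ∃ β, 2 ^ k + 1 - (i + 2 ^ k') ∈ lam β ∧ 2 ^ k + 1 - (j + 2 ^ k') ∈ lam β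

/-- Number of nonempty entries of a vector of sets. -/
def nne {n : ℕ} (Pi : Fin n → Finset ℕ) : ℕ :=
  (Finset.univ.filter (fun q => Pi q ≠ ∅)).card

/-- `succ(P) = {P ∪ (P·g)↑ : g}`. -/
def succSet {n : ℕ} (P : Fin n → Finset ℕ) : Finset (Fin n → Finset ℕ) :=
  (Finset.univ : Finset (Fin n → Fin n)).image (fun g => vUnion P (vUp (dotAct P g)))

/-- The graded set `U_{m,n}^{(k)}` of U-pairs. -/
def Uset (m n : ℕ) : ℕ → Set ((Fin m → Finset ℕ) × (Fin n → Finset ℕ))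
  | 0 => {x | x = (fun p => if p.val = 0 then {1} else ∅,
                   fun q => if q.val = 0 then {1} else ∅)}
  | k + 1 => {x | ∃ L P, (L, P) ∈ Uset m n k ∧ ∃ (f : Fin m → Fin m) (g : Fin n → Fin n),
      x = (vUnion (dotAct L f) (vUp L), vUnion P (vUp (dotAct P g)))}

/-- The `r`-Stirling number: partitions of `{1,…,a}` into `b` nonempty blocks
with `1,…,r` in pairwise distinct blocks. -/
noncomputable def rStirling (a b r : ℕ) : ℕ :=
  Set.ncard {C : Finset (Finset ℕ) |
    C.card = b ∧ (∅ ∉ C) ∧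
    (∀ B ∈ C, ∀ B' ∈ C, B ≠ B' → Disjoint B B') ∧
    C.sup id = Finset.Icc 1 a ∧
    ∀ x ∈ Finset.Icc 1 r, ∀ y ∈ Finset.Icc 1 r, x ≠ y →
      ∀ B ∈ C, x ∈ B → y ∉ B}

/-- The Stirling number of the second kind: the number of partitions of an
`a`-element set into `b` nonempty blocks. -/
noncomputable def stirling2 (a b : ℕ) : ℕ := rStirling a b 0

/-- The entry `s_n^{(i,j)}` (with `1 ≤ i,j ≤ n`). -/
noncomputable def sEntry (n i j : ℕ) : ℕ :=
  if i ≤ j then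
    (j - i).factorial * Nat.choose (n - i) (j - i) *
      ∑ α ∈ Finset.Icc (j - i) i, Nat.choose i α * i ^ (i - α) * stirling2 α (j - i)
  else 0

/-- The matrix `S_n`, with rows and columns indexed by `{1,…,n}`. -/
noncomputable def Smat (n : ℕ) : Matrix (Fin n) (Fin n) ℕ :=
  fun i j => sEntry n (i.val + 1) (j.val + 1)

/-- One step of the shuffle-automaton action on subsets of the grid. -/
def stepE {m n : ℕ} (E : Finset (Fin m × Fin n)) (f : Fin m → Fin m) (g : Fin n → Fin n) :
    Finset (Fin m × Fin n) :=
  E.image (fun p => (f p.1, p.2)) ∪ E.image (fun p => (p.1, g p.2))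

/-- Reachability from `{(0,0)}` by finitely many steps. -/
def Reach {m n : ℕ} (hm : 0 < m) (hn : 0 < n) (E : Finset (Fin m × Fin n)) : Prop :=
  Relation.ReflTransGen (fun E1 E2 => ∃ f g, E2 = stepE E1 f g)
    {(⟨0, hm⟩, ⟨0, hn⟩)} E

/-- Reachability from `{(0,0)}` in at most `t` steps. -/
def ReachIn {m n : ℕ} (hm : 0 < m) (hn : 0 < n) :
    ℕ → Finset (Fin m × Fin n) → Prop
  | 0, E => E = {(⟨0, hm⟩, ⟨0, hn⟩)}
  | t + 1, E => ReachIn hm hn t E ∨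
      ∃ E' f g, ReachIn hm hn t E' ∧ E = stepE E' f g

/-- `s(Λ,P) = {(i,j) : λ_i ∩ ρ_j ≠ ∅}`. -/
def sTab {m n : ℕ} (L : Fin m → Finset ℕ) (P : Fin n → Finset ℕ) :
    Finset (Fin m × Fin n) :=
  Finset.univ.filter (fun p => (L p.1 ∩ P p.2).Nonempty)

section AuxReach

variable {m n : ℕ} (hm : 0 < m) (hn : 0 < n)

lemma reach_step {A : Finset (Fin m × Fin n)} (h : Reach hm hn A)
    (f : Fin m → Fin m) (g : Fin n → Fin n) : Reach hm hn (stepE A f g) :=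
  Relation.ReflTransGen.tail h ⟨f, g, rfl⟩

lemma mem_stepE {E : Finset (Fin m × Fin n)} {f : Fin m → Fin m} {g : Fin n → Fin n}
    {x : Fin m} {y : Fin n} :
    (x, y) ∈ stepE E f g ↔
      (∃ u v, (u, v) ∈ E ∧ f u = x ∧ v = y) ∨ (∃ u v, (u, v) ∈ E ∧ u = x ∧ g v = y) := by
  simp [stepE, Finset.mem_union, Finset.mem_image, Prod.exists, Prod.ext_iff]

lemma reach_grow_snd {z : Fin m} {D : Finset (Fin n)} {d : Fin n} (hd : d ∈ D)
    (h : Reach hm hn ({z} ×ˢ D)) (c : Fin n) :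
    Reach hm hn ({z} ×ˢ insert c D) := by
  have h2 := reach_step hm hn h id (Function.update id d c)
  have hEq : stepE ({z} ×ˢ D) id (Function.update id d c) = {z} ×ˢ insert c D := by
    ext ⟨x, y⟩
    rw [mem_stepE]
    simp only [Finset.mem_product, Finset.mem_singleton, Finset.mem_insert, id_eq]
    constructor
    · rintro (⟨u, v, ⟨hu, hv⟩, rfl, rfl⟩ | ⟨u, v, ⟨hu, hv⟩, rfl, hg⟩)
      · exact ⟨hu, Or.inr hv⟩
      · refine ⟨hu, ?_⟩
        rw [Function.update_apply] at hg
        by_cases hvd : v = d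
        · rw [if_pos hvd] at hg; exact Or.inl hg.symm
        · rw [if_neg hvd] at hg; simp only [id_eq] at hg; exact Or.inr (hg ▸ hv)
    · rintro ⟨hx, hy⟩
      rcases hy with hyc | hy
      · right
        exact ⟨z, d, ⟨rfl, hd⟩, hx.symm, by simp [Function.update_apply, hyc]⟩
      · left
        exact ⟨z, y, ⟨rfl, hy⟩, hx.symm, rfl⟩
  rwa [hEq] at h2

lemma reach_grow_fst {R : Finset (Fin m)} {D : Finset (Fin n)} {d : Fin m} (hd : d ∈ R)
    (h : Reach hm hn (R ×ˢ D)) (r : Fin m) :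
    Reach hm hn ((insert r R) ×ˢ D) := by
  have h2 := reach_step hm hn h (Function.update id d r) id
  have hEq : stepE (R ×ˢ D) (Function.update id d r) id = (insert r R) ×ˢ D := by
    ext ⟨x, y⟩
    rw [mem_stepE]
    simp only [Finset.mem_product, Finset.mem_insert, id_eq]
    constructor
    · rintro (⟨u, v, ⟨hu, hv⟩, hf, rfl⟩ | ⟨u, v, ⟨hu, hv⟩, rfl, rfl⟩)
      · refine ⟨?_, hv⟩
        rw [Function.update_apply] at hf
        by_cases hud : u = d
        · rw [if_pos hud] at hf; exact Or.inl hf.symm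
        · rw [if_neg hud] at hf; simp only [id_eq] at hf; exact Or.inr (hf ▸ hu)
      · exact ⟨Or.inr hu, hv⟩
    · rintro ⟨hx, hy⟩
      rcases hx with hxr | hx
      · left
        exact ⟨d, y, ⟨hd, hy⟩, by simp [Function.update_apply, hxr], rfl⟩
      · right
        exact ⟨x, y, ⟨hx, hy⟩, rfl, rfl⟩
  rwa [hEq] at h2

lemma reach_full :
    Reach hm hn ((Finset.univ : Finset (Fin m)) ×ˢ (Finset.univ : Finset (Fin n))) := by
  have hrow : ∀ C : Finset (Fin n),
      Reach hm hn ({(⟨0, hm⟩ : Fin m)} ×ˢ insert ⟨0, hn⟩ C) := by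
    intro C
    induction C using Finset.induction_on with
    | empty =>
      have e : ({(⟨0, hm⟩ : Fin m)} ×ˢ insert (⟨0, hn⟩ : Fin n) (∅ : Finset (Fin n)))
          = ({((⟨0, hm⟩ : Fin m), (⟨0, hn⟩ : Fin n))} : Finset (Fin m × Fin n)) := by
        ext ⟨x, y⟩; simp [Prod.ext_iff]
      rw [e]
      exact Relation.ReflTransGen.refl
    | @insert c C hc IH =>
      have := reach_grow_snd hm hn (Finset.mem_insert_self _ C) IH c
      rwa [Finset.insert_comm] at this
  have hrowU : Reach hm hn ({(⟨0, hm⟩ : Fin m)} ×ˢ (Finset.univ : Finset (Fin n))) := by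
    have := hrow Finset.univ
    rwa [Finset.insert_eq_self.2 (Finset.mem_univ _)] at this
  have hgrid : ∀ R : Finset (Fin m),
      Reach hm hn ((insert (⟨0, hm⟩ : Fin m) R) ×ˢ (Finset.univ : Finset (Fin n))) := by
    intro R
    induction R using Finset.induction_on with
    | empty =>
      have e : ((insert (⟨0, hm⟩ : Fin m) (∅ : Finset (Fin m))) ×ˢ (Finset.univ : Finset (Fin n)))
          = ({(⟨0, hm⟩ : Fin m)} ×ˢ (Finset.univ : Finset (Fin n))) := by
        ext ⟨x, y⟩; simp
      rw [e]
      exact hrowU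
    | @insert r R hr IH =>
      have := reach_grow_fst hm hn (Finset.mem_insert_self _ R) IH r
      rwa [Finset.insert_comm] at this
  have := hgrid Finset.univ
  rwa [Finset.insert_eq_self.2 (Finset.mem_univ _)] at this

lemma reach_cross (i : Fin m) (j : Fin n) :
    Reach hm hn (({i} ×ˢ (Finset.univ : Finset (Fin n)))
      ∪ ((Finset.univ : Finset (Fin m)) ×ˢ {j})) := by
  have h2 := reach_step hm hn (reach_full hm hn) (fun _ => i) (fun _ => j)
  have hEq : stepE ((Finset.univ : Finset (Fin m)) ×ˢ (Finset.univ : Finset (Fin n)))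
      (fun _ => i) (fun _ => j)
      = ({i} ×ˢ (Finset.univ : Finset (Fin n))) ∪ ((Finset.univ : Finset (Fin m)) ×ˢ {j}) := by
    ext ⟨x, y⟩
    rw [mem_stepE]
    constructor
    · rintro (⟨u, v, _, hf, rfl⟩ | ⟨u, v, _, rfl, hg⟩)
      · refine Finset.mem_union_left _ ?_
        rw [Finset.mem_product, Finset.mem_singleton]
        exact ⟨hf.symm, Finset.mem_univ _⟩
      · refine Finset.mem_union_right _ ?_
        rw [Finset.mem_product, Finset.mem_singleton]
        exact ⟨Finset.mem_univ _, hg.symm⟩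
    · intro hxy
      rcases Finset.mem_union.1 hxy with h' | h'
      · have hx : x = i := by simpa using (Finset.mem_product.1 h').1
        exact Or.inl ⟨x, y, by simp, hx.symm, rfl⟩
      · have hy : y = j := by simpa using (Finset.mem_product.1 h').2
        exact Or.inr ⟨x, y, by simp, rfl, hy.symm⟩
  rwa [hEq] at h2

lemma reach_cross_union (i : Fin m) (j : Fin n) (S : Finset (Fin m × Fin n)) :
    Reach hm hn ((({i} ×ˢ (Finset.univ : Finset (Fin n)))
      ∪ ((Finset.univ : Finset (Fin m)) ×ˢ {j})) ∪ S) := by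
  classical
  induction S using Finset.induction_on with
  | empty =>
    rw [Finset.union_empty]
    exact reach_cross hm hn i j
  | @insert p S hp IH =>
    obtain ⟨a, b⟩ := p
    set C : Finset (Fin m × Fin n) :=
      ({i} ×ˢ (Finset.univ : Finset (Fin n))) ∪ ((Finset.univ : Finset (Fin m)) ×ˢ {j})
      with hC
    set G : Finset (Fin m × Fin n) := C ∪ S with hG
    have hrow : ∀ y : Fin n, (i, y) ∈ G := by
      intro y; rw [hG, hC]; simp
    have hcol : ∀ x : Fin m, (x, j) ∈ G := by
      intro x; rw [hG, hC]; simp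
    have hGsub : ∀ q : Fin m × Fin n, q ∈ G → q ∈ C ∪ insert (a, b) S := by
      intro q hq
      rcases Finset.mem_union.1 hq with h' | h'
      · exact Finset.mem_union_left _ h'
      · exact Finset.mem_union_right _ (Finset.mem_insert_of_mem h')
    by_cases hpG : (a, b) ∈ G
    · have hSame : C ∪ insert (a, b) S = G := by
        rw [hG]
        ext q
        simp only [Finset.mem_union, Finset.mem_insert]
        constructor
        · rintro (hq | hq | hq)
          · exact Or.inl hq
          · rw [hq]
            rcases Finset.mem_union.1 hpG with h' | h'
            · exact Or.inl h'
            · exact Or.inr h'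
          · exact Or.inr hq
        · rintro (hq | hq)
          · exact Or.inl hq
          · exact Or.inr (Or.inr hq)
      rw [hSame]
      exact IH
    · have hbj : b ≠ j := by
        intro hbj'
        apply hpG
        rw [hbj']
        exact hcol a
      -- Step 1: fill column b completely
      have r1 := reach_step hm hn IH id (Function.update id j b)
      have hEq1 : stepE G id (Function.update id j b)
          = G ∪ (Finset.univ : Finset (Fin m)) ×ˢ {b} := by
        ext ⟨x, y⟩
        rw [mem_stepE]
        simp only [id_eq]
        constructor
        · rintro (⟨u, v, hu, rfl, rfl⟩ | ⟨u, v, hu, rfl, hg⟩)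
          · exact Finset.mem_union_left _ hu
          · rw [Function.update_apply] at hg
            by_cases hvj : v = j
            · rw [if_pos hvj] at hg
              refine Finset.mem_union_right _ ?_
              rw [Finset.mem_product, Finset.mem_singleton]
              exact ⟨Finset.mem_univ _, hg.symm⟩
            · rw [if_neg hvj] at hg; simp only [id_eq] at hg
              rw [← hg]
              exact Finset.mem_union_left _ hu
        · intro hxy
          rcases Finset.mem_union.1 hxy with h' | h'
          · exact Or.inl ⟨x, y, h', rfl, rfl⟩
          · have hyb : y = b := by simpa using (Finset.mem_product.1 h').2
            exact Or.inr ⟨x, j, hcol x, rfl, by simp [Function.update_apply, hyb]⟩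
      rw [hEq1] at r1
      -- Step 2: restore column b to its correct contents
      have r2 := reach_step hm hn r1
        (fun x => if (x, b) ∈ G ∨ x = a ∨ x = i then x else i)
        (Function.update id b j)
      have hEq2 : stepE (G ∪ (Finset.univ : Finset (Fin m)) ×ˢ {b})
          (fun x => if (x, b) ∈ G ∨ x = a ∨ x = i then x else i)
          (Function.update id b j)
          = C ∪ insert (a, b) S := by
        ext ⟨x, y⟩
        rw [mem_stepE]
        constructor
        · rintro (⟨u, v, hu, hf, rfl⟩ | ⟨u, v, hu, rfl, hg⟩)
          · by_cases hcond : (u, b) ∈ G ∨ u = a ∨ u = i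
            · rw [if_pos hcond] at hf
              rcases Finset.mem_union.1 hu with h' | h'
              · rw [← hf]; exact hGsub _ h'
              · have hvb : v = b := by simpa using (Finset.mem_product.1 h').2
                rw [← hf, hvb]
                rcases hcond with h'' | h'' | h''
                · exact hGsub _ h''
                · rw [h'']
                  exact Finset.mem_union_right _ (Finset.mem_insert_self _ _)
                · rw [h'']
                  exact hGsub _ (hrow b)
            · rw [if_neg hcond] at hf
              rw [← hf]
              exact hGsub _ (hrow v)
          · rw [Function.update_apply] at hg
            by_cases hvb : v = b
            · rw [if_pos hvb] at hg
              rw [← hg]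
              exact hGsub _ (hcol u)
            · rw [if_neg hvb] at hg; simp only [id_eq] at hg
              rcases Finset.mem_union.1 hu with h' | h'
              · rw [← hg]; exact hGsub _ h'
              · exact absurd (by simpa using (Finset.mem_product.1 h').2) hvb
        · intro hxy
          have hxyG : (x, y) ∈ G ∨ (x = a ∧ y = b) := by
            rcases Finset.mem_union.1 hxy with h' | h'
            · exact Or.inl (Finset.mem_union_left _ h')
            · rcases Finset.mem_insert.1 h' with h'' | h''
              · exact Or.inr (by simpa [Prod.ext_iff] using h'')
              · exact Or.inl (Finset.mem_union_right _ h'')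
          rcases hxyG with hxyG | ⟨hxa, hyb2⟩
          · by_cases hyb : y = b
            · left
              refine ⟨x, y, Finset.mem_union_left _ hxyG, ?_, rfl⟩
              rw [if_pos (Or.inl (hyb ▸ hxyG))]
            · right
              exact ⟨x, y, Finset.mem_union_left _ hxyG, rfl,
                by simp [Function.update_apply, hyb]⟩
          · left
            refine ⟨a, b, ?_, ?_, hyb2.symm⟩
            · refine Finset.mem_union_right _ ?_
              rw [Finset.mem_product, Finset.mem_singleton]
              exact ⟨Finset.mem_univ _, rfl⟩
            · rw [if_pos (Or.inr (Or.inl rfl))]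
              exact hxa.symm
      rw [hEq2] at r2
      exact r2

end AuxReach
theorem stmt18 (m n : ℕ) (hm : 0 < m) (hn : 0 < n) (E : Finset (Fin m × Fin n))
    (h : ∃ (i : Fin m) (j : Fin n),
      (∀ j' : Fin n, (i, j') ∈ E) ∧ (∀ i' : Fin m, (i', j) ∈ E)) :
    Reach hm hn E := by
  obtain ⟨i, j, hi, hj⟩ := h
  have key := reach_cross_union hm hn i j E
  have hEq : (({i} ×ˢ (Finset.univ : Finset (Fin n)))
      ∪ ((Finset.univ : Finset (Fin m)) ×ˢ {j})) ∪ E = E := by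
    apply Finset.union_eq_right.2
    intro q hq
    rcases Finset.mem_union.1 hq with h' | h'
    · have := (Finset.mem_product.1 h').1
      have hqi : q.1 = i := by simpa using this
      have := hi q.2
      rw [← hqi] at this
      simpa using this
    · have := (Finset.mem_product.1 h').2
      have hqj : q.2 = j := by simpa using this
      have := hj q.1
      rw [← hqj] at this
      simpa using this
  rwa [hEq] at key
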